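/- Let k₁, k₂, k₃, k₄ be positive integers with k₁ + k₂ + k₃ + k₄ = n. Then the ratio of the square of the multinomial coefficient to the doubled multinomial coefficient satisfies (n! / (k₁!·k₂!·k₃!·k₄!))² / ((2n)! / ((2k₁)!·(2k₂)!·(2k₃)!·(2k₄)!)) ≤ √(n / (k₁·k₂·k₃·k₄)). -/

import Mathlib

-- upper bound: centralBinom k ^ 2 * (3k+1) ≤ 16^k
theorem lemB (k : ℕ) : (Nat.centralBinom k)^2 * (3*k+1) ≤ 16^k := by
  induction k with
  | zero => simp [Nat.centralBinom_zero]
  | succ k ih =>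
    have hrel := Nat.succ_mul_centralBinom_succ k
    have hsq : ((k+1) * Nat.centralBinom (k+1))^2 = (2*(2*k+1))^2 * (Nat.centralBinom k)^2 := by
      rw [hrel]; ring
    have key : (Nat.centralBinom (k+1))^2 * (3*(k+1)+1) * ((k+1)^2 * (3*k+1)) ≤ 16^(k+1) * ((k+1)^2 * (3*k+1)) := by
      have h1 : (Nat.centralBinom (k+1))^2 * (3*(k+1)+1) * ((k+1)^2 * (3*k+1))
          = (2*(2*k+1))^2 * (3*k+4) * ((Nat.centralBinom k)^2 * (3*k+1)) := by
        nlinarith [hsq]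
      rw [h1, pow_succ]
      have h2 : (2*(2*k+1))^2 * (3*k+4) ≤ 16 * ((k+1)^2 * (3*k+1)) := by nlinarith
      calc (2*(2*k+1))^2 * (3*k+4) * ((Nat.centralBinom k)^2 * (3*k+1))
          ≤ (2*(2*k+1))^2 * (3*k+4) * 16^k := Nat.mul_le_mul_left _ ih
        _ ≤ 16 * ((k+1)^2 * (3*k+1)) * 16^k := Nat.mul_le_mul_right _ h2
        _ = 16^k * 16 * ((k+1)^2 * (3*k+1)) := by ring
    exact Nat.le_of_mul_le_mul_right key (by positivity)

theorem lemA (k : ℕ) : 16^(k+1) ≤ (Nat.centralBinom (k+1))^2 * (4*(k+1)) := by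
  induction k with
  | zero => decide
  | succ k ih =>
    have hrel := Nat.succ_mul_centralBinom_succ (k+1)
    have hsq : ((k+2) * Nat.centralBinom (k+2))^2 = (2*(2*(k+1)+1))^2 * (Nat.centralBinom (k+1))^2 := by
      rw [hrel]; ring_nf
    have key : 16^(k+2) * ((k+2)^2 * (4*(k+1))) ≤ (Nat.centralBinom (k+2))^2 * (4*(k+2)) * ((k+2)^2 * (4*(k+1))) := by
      have h1 : (Nat.centralBinom (k+2))^2 * (4*(k+2)) * ((k+2)^2 * (4*(k+1)))
          = (2*(2*(k+1)+1))^2 * (4*(k+2)) * ((Nat.centralBinom (k+1))^2 * (4*(k+1))) := by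
        nlinarith [hsq]
      rw [h1]
      have h2 : 16 * ((k+2)^2 * (4*(k+1))) ≤ (2*(2*(k+1)+1))^2 * (4*(k+2)) := by nlinarith
      calc 16^(k+2) * ((k+2)^2 * (4*(k+1)))
          = 16^(k+1) * (16 * ((k+2)^2 * (4*(k+1)))) := by rw [pow_succ]; ring
        _ ≤ ((Nat.centralBinom (k+1))^2 * (4*(k+1))) * (16 * ((k+2)^2 * (4*(k+1)))) :=
            Nat.mul_le_mul_right _ ih
        _ ≤ ((Nat.centralBinom (k+1))^2 * (4*(k+1))) * ((2*(2*(k+1)+1))^2 * (4*(k+2))) := by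
            exact Nat.mul_le_mul_left _ h2
        _ = (2*(2*(k+1)+1))^2 * (4*(k+2)) * ((Nat.centralBinom (k+1))^2 * (4*(k+1))) := by ring
    exact Nat.le_of_mul_le_mul_right key (by positivity)

theorem cb_fact (k : ℕ) : (Nat.centralBinom k : ℝ) * (k.factorial : ℝ)^2 = ((2*k).factorial : ℝ) := by
  have := Nat.choose_mul_factorial_mul_factorial (show k ≤ 2*k by omega)
  rw [show 2*k - k = k by omega] at this
  rw [Nat.centralBinom_eq_two_mul_choose]
  have : ((2*k).choose k * k.factorial * k.factorial : ℕ) = ((2*k).factorial : ℕ) := this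
  push_cast [← this]; ring

set_option maxHeartbeats 1600000 in
theorem multinomial_sq_ratio_le (n k₁ k₂ k₃ k₄ : ℕ)
    (h₁ : 0 < k₁) (h₂ : 0 < k₂) (h₃ : 0 < k₃) (h₄ : 0 < k₄)
    (hsum : k₁ + k₂ + k₃ + k₄ = n) :
    ((n.factorial : ℝ) /
          (k₁.factorial * k₂.factorial * k₃.factorial * k₄.factorial)) ^ 2 /
        (((2 * n).factorial : ℝ) /
          ((2 * k₁).factorial * (2 * k₂).factorial * (2 * k₃).factorial *
            (2 * k₄).factorial))
      ≤ Real.sqrt ((n : ℝ) / ((k₁ : ℝ) * k₂ * k₃ * k₄)) := by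
  have hn : 0 < n := by omega
  set C : ℝ := (Nat.centralBinom n : ℝ) with hC
  set c₁ : ℝ := (Nat.centralBinom k₁ : ℝ) with hc₁
  set c₂ : ℝ := (Nat.centralBinom k₂ : ℝ) with hc₂
  set c₃ : ℝ := (Nat.centralBinom k₃ : ℝ) with hc₃
  set c₄ : ℝ := (Nat.centralBinom k₄ : ℝ) with hc₄
  have hCpos : 0 < C := by rw [hC]; exact_mod_cast Nat.centralBinom_pos n
  have hc₁pos : 0 < c₁ := by rw [hc₁]; exact_mod_cast Nat.centralBinom_pos k₁
  have hc₂pos : 0 < c₂ := by rw [hc₂]; exact_mod_cast Nat.centralBinom_pos k₂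
  have hc₃pos : 0 < c₃ := by rw [hc₃]; exact_mod_cast Nat.centralBinom_pos k₃
  have hc₄pos : 0 < c₄ := by rw [hc₄]; exact_mod_cast Nat.centralBinom_pos k₄
  have f1 : 0 < (k₁.factorial : ℝ) := by exact_mod_cast k₁.factorial_pos
  have f2 : 0 < (k₂.factorial : ℝ) := by exact_mod_cast k₂.factorial_pos
  have f3 : 0 < (k₃.factorial : ℝ) := by exact_mod_cast k₃.factorial_pos
  have f4 : 0 < (k₄.factorial : ℝ) := by exact_mod_cast k₄.factorial_pos
  have fn : 0 < (n.factorial : ℝ) := by exact_mod_cast n.factorial_pos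
  have hLHS : ((n.factorial : ℝ) /
          (k₁.factorial * k₂.factorial * k₃.factorial * k₄.factorial)) ^ 2 /
        (((2 * n).factorial : ℝ) /
          ((2 * k₁).factorial * (2 * k₂).factorial * (2 * k₃).factorial *
            (2 * k₄).factorial)) = (c₁ * c₂ * c₃ * c₄) / C := by
    rw [← cb_fact n, ← cb_fact k₁, ← cb_fact k₂, ← cb_fact k₃, ← cb_fact k₄]
    field_simp
    rw [← hC, ← hc₁, ← hc₂, ← hc₃, ← hc₄, mul_div_cancel_right₀ _ hCpos.ne']
  rw [hLHS]
  apply Real.le_sqrt_of_sq_le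
  have hA : (16:ℝ)^n ≤ C^2 * (4*n) := by
    obtain ⟨m, rfl⟩ : ∃ m, n = m + 1 := ⟨n - 1, by omega⟩
    rw [hC]; exact_mod_cast lemA m
  have hB : ∀ k : ℕ, ((Nat.centralBinom k : ℝ))^2 * (2*k) ≤ 16^k := by
    intro k
    have := lemB k
    have h2 : (Nat.centralBinom k)^2 * (2*k) ≤ (Nat.centralBinom k)^2 * (3*k+1) :=
      Nat.mul_le_mul_left _ (by omega)
    exact_mod_cast h2.trans this
  have hB₁ := hB k₁; have hB₂ := hB k₂; have hB₃ := hB k₃; have hB₄ := hB k₄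
  rw [← hc₁] at hB₁; rw [← hc₂] at hB₂; rw [← hc₃] at hB₃; rw [← hc₄] at hB₄
  have hk₁ : (0:ℝ) < k₁ := by exact_mod_cast h₁
  have hk₂ : (0:ℝ) < k₂ := by exact_mod_cast h₂
  have hk₃ : (0:ℝ) < k₃ := by exact_mod_cast h₃
  have hk₄ : (0:ℝ) < k₄ := by exact_mod_cast h₄
  have p12 : (c₁^2*(2*k₁)) * (c₂^2*(2*k₂)) ≤ 16^k₁ * 16^k₂ :=
    mul_le_mul hB₁ hB₂ (by positivity) (by positivity)
  have p123 : (c₁^2*(2*k₁)) * (c₂^2*(2*k₂)) * (c₃^2*(2*k₃)) ≤ 16^k₁ * 16^k₂ * 16^k₃ :=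
    mul_le_mul p12 hB₃ (by positivity) (by positivity)
  have p : (c₁^2*(2*k₁)) * (c₂^2*(2*k₂)) * (c₃^2*(2*k₃)) * (c₄^2*(2*k₄))
      ≤ 16^k₁ * 16^k₂ * 16^k₃ * 16^k₄ :=
    mul_le_mul p123 hB₄ (by positivity) (by positivity)
  have h16 : (16:ℝ)^k₁ * 16^k₂ * 16^k₃ * 16^k₄ = 16^n := by
    rw [← pow_add, ← pow_add, ← pow_add, hsum]
  rw [h16] at p
  rw [div_pow, div_le_div_iff₀ (by positivity) (by positivity)]
  nlinarith [p.trans hA, sq_nonneg C, mul_pos hCpos hCpos]
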